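/- Let n be a positive integer and let S be a complex 2n×2n matrix of the block form S = [[λ, μ], [conj(μ), conj(λ)]] with λ, μ complex n×n matrices. Then Sᴴ K S = K, where K = [[I, 0], [0, −I]], if and only if both λλᴴ − μμᴴ = I and λμᵀ = μλᵀ hold. -/

import Mathlib

open Matrix

lemma cmapH {n : ℕ} (M : Matrix (Fin n) (Fin n) ℂ) :
    (M.map (starRingEnd ℂ))ᴴ = Mᵀ := by
  ext i j; simp [conjTranspose_apply]

lemma tmapC {n : ℕ} (M : Matrix (Fin n) (Fin n) ℂ) :
    Mᵀ.map (starRingEnd ℂ) = Mᴴ := by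
  ext i j; simp [conjTranspose_apply]

lemma hmapC {n : ℕ} (M : Matrix (Fin n) (Fin n) ℂ) :
    Mᴴ.map (starRingEnd ℂ) = Mᵀ := by
  ext i j; simp [conjTranspose_apply]

/-- For `S = [[λ, μ], [conj μ, conj λ]]`, one has `Sᴴ K S = K`
(with `K = [[I, 0], [0, −I]]`) iff `λλᴴ − μμᴴ = I` and `λμᵀ = μλᵀ`. -/
theorem pseudoUnitary_iff_block_conditions (n : ℕ) (hn : 0 < n)
    (lam mu : Matrix (Fin n) (Fin n) ℂ) :
    ((fromBlocks lam mu (mu.map (starRingEnd ℂ)) (lam.map (starRingEnd ℂ)))ᴴ *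
        fromBlocks (1 : Matrix (Fin n) (Fin n) ℂ) (0 : Matrix (Fin n) (Fin n) ℂ)
          (0 : Matrix (Fin n) (Fin n) ℂ) (-1 : Matrix (Fin n) (Fin n) ℂ) *
        fromBlocks lam mu (mu.map (starRingEnd ℂ)) (lam.map (starRingEnd ℂ)) =
      fromBlocks (1 : Matrix (Fin n) (Fin n) ℂ) (0 : Matrix (Fin n) (Fin n) ℂ)
        (0 : Matrix (Fin n) (Fin n) ℂ) (-1 : Matrix (Fin n) (Fin n) ℂ)) ↔
    (lam * lamᴴ - mu * muᴴ = 1 ∧ lam * muᵀ = mu * lamᵀ) := by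
  set S := fromBlocks lam mu (mu.map (starRingEnd ℂ)) (lam.map (starRingEnd ℂ)) with hS
  set K := fromBlocks (1 : Matrix (Fin n) (Fin n) ℂ) (0 : Matrix (Fin n) (Fin n) ℂ)
      (0 : Matrix (Fin n) (Fin n) ℂ) (-1 : Matrix (Fin n) (Fin n) ℂ) with hK
  have hK2 : K * K = 1 := by
    rw [hK, fromBlocks_multiply]
    simp [← fromBlocks_one]
  have key : (Sᴴ * K * S = K) ↔ (S * K * Sᴴ = K) := by
    constructor
    · intro h
      have h1 : (K * Sᴴ * K) * S = 1 := by
        simp only [mul_assoc] at h ⊢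
        rw [h, hK2]
      have h2 : S * (K * Sᴴ * K) = 1 := mul_eq_one_comm.mp h1
      have h3 : S * (K * Sᴴ * K) * K = S * K * Sᴴ := by
        simp only [mul_assoc]; rw [hK2, mul_one]
      rw [← h3, h2, one_mul]
    · intro h
      have h1 : (K * S * K) * Sᴴ = 1 := by
        simp only [mul_assoc] at h ⊢
        rw [h, hK2]
      have h2 : Sᴴ * (K * S * K) = 1 := mul_eq_one_comm.mp h1
      have h3 : Sᴴ * (K * S * K) * K = Sᴴ * K * S := by
        simp only [mul_assoc]; rw [hK2, mul_one]
      rw [← h3, h2, one_mul]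
  rw [key]
  have hcalc : S * K * Sᴴ =
      fromBlocks (lam * lamᴴ - mu * muᴴ) (lam * muᵀ - mu * lamᵀ)
        (mu.map (starRingEnd ℂ) * lamᴴ - lam.map (starRingEnd ℂ) * muᴴ)
        (mu.map (starRingEnd ℂ) * muᵀ - lam.map (starRingEnd ℂ) * lamᵀ) := by
    rw [hS, hK, fromBlocks_conjTranspose, fromBlocks_multiply, fromBlocks_multiply]
    rw [cmapH, cmapH]
    rw [fromBlocks_inj]
    refine ⟨?_, ?_, ?_, ?_⟩ <;> noncomm_ring
  rw [hcalc]
  rw [fromBlocks_inj]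
  constructor
  · rintro ⟨h1, h2, -, -⟩
    exact ⟨h1, sub_eq_zero.mp h2⟩
  · rintro ⟨h1, h2⟩
    have c2 := congrArg (fun M : Matrix (Fin n) (Fin n) ℂ => M.map (starRingEnd ℂ)) h2
    rw [Matrix.map_mul, Matrix.map_mul, tmapC, tmapC] at c2
    have c1 := congrArg (fun M : Matrix (Fin n) (Fin n) ℂ => M.map (starRingEnd ℂ)) h1
    rw [Matrix.map_sub _ (fun a b => map_sub (starRingEnd ℂ) a b), Matrix.map_mul, Matrix.map_mul, hmapC, hmapC] at c1
    simp only [Matrix.map_one (starRingEnd ℂ) (map_zero _) (map_one _)] at c1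
    refine ⟨h1, sub_eq_zero.mpr h2, sub_eq_zero.mpr c2.symm, ?_⟩
    have : lam.map (starRingEnd ℂ) * lamᵀ - mu.map (starRingEnd ℂ) * muᵀ = 1 := c1
    linear_combination (norm := abel) -this
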